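/- Let d ≥ 1 be an odd integer and let P : ℝ[X] satisfy: natDegree P = 2d, P.coeff k = 0 for every odd k, P.coeff 0 ≠ 0, Multiset.card P.roots = 2d, and exactly d roots of P (with multiplicity) lie in (0, ∞). Let ε ∈ ℝ and set Q₊ = P - ε • X^d and Q₋ = P + ε • X^d; assume Multiset.card (Q₊.roots) = 2d = Multiset.card (Q₋.roots) and that each of Q₊, Q₋ has exactly d roots (with multiplicity) in (0, ∞). Then (∏ roots of P in (0, ∞))² = (∏ roots of Q₊ in (0, ∞)) * (∏ roots of Q₋ in (0, ∞)). (This is the odd-degree case of the key lemma for Arnold's theorem: ∑ (t_i - (t_i^{-ε} + t_i^{ε})/2) = 0 in logarithmic coordinates.) -/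

import Mathlib

open Polynomial

private lemma comp_negX_eq {p : ℝ[X]} (h : ∀ k, Odd k → p.coeff k = 0) :
    p.comp (-X) = p := by
  rw [comp_eq_sum_left]
  conv_rhs => rw [← sum_C_mul_X_pow_eq p]
  rw [Polynomial.sum_def, Polynomial.sum_def]
  refine Finset.sum_congr rfl fun e he => ?_
  have heven : Even e := Nat.not_odd_iff_even.1 fun ho => (mem_support_iff.1 he) (h e ho)
  rw [heven.neg_pow]

private lemma dvd_comp_negX {a : ℝ} {n : ℕ} {p : ℝ[X]} (h : (X - C a) ^ n ∣ p) :
    (X - C (-a)) ^ n ∣ p.comp (-X) := by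
  obtain ⟨q, rfl⟩ := h
  refine ⟨(-1) ^ n * q.comp (-X), ?_⟩
  rw [mul_comp, pow_comp, sub_comp, X_comp, C_comp]
  have h1 : (-X - C a : ℝ[X]) = -(X - C (-a)) := by rw [map_neg]; ring
  rw [h1, neg_pow]
  ring

private lemma rootMultiplicity_neg {p : ℝ[X]} (hp : p ≠ 0) (hc : p.comp (-X) = p) (a : ℝ) :
    p.rootMultiplicity (-a) = p.rootMultiplicity a := by
  have key : ∀ b : ℝ, p.rootMultiplicity (-b) ≤ p.rootMultiplicity b := by
    intro b
    rw [show p.rootMultiplicity (-b) = rootMultiplicity (-b) p from rfl]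
    rw [show p.rootMultiplicity b = rootMultiplicity b p from rfl]
    rw [Polynomial.le_rootMultiplicity_iff hp]
    have := dvd_comp_negX (Polynomial.pow_rootMultiplicity_dvd p (-b))
    rwa [neg_neg, hc] at this
  refine le_antisymm (key a) ?_
  have := key (-a)
  rwa [neg_neg] at this

private lemma roots_map_neg {p : ℝ[X]} (hp : p ≠ 0) (hc : p.comp (-X) = p) :
    p.roots.map (fun x => -x) = p.roots := by
  refine Multiset.ext.2 fun a => ?_
  calc (p.roots.map (fun x => -x)).count a
      = (p.roots.map (fun x => -x)).count (-(-a)) := by rw [neg_neg]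
    _ = p.roots.count (-a) := Multiset.count_map_eq_count' _ _ neg_injective _
    _ = p.rootMultiplicity (-a) := count_roots p
    _ = p.rootMultiplicity a := rootMultiplicity_neg hp hc a
    _ = p.roots.count a := (count_roots p).symm

private lemma key_prod {T : ℝ[X]} (hT : T.eval 0 ≠ 0) (hc : T.comp (-X) = T) :
    T.roots.prod =
      (-1) ^ (Multiset.card (T.roots.filter fun x => 0 < x)) *
        ((T.roots.filter fun x => 0 < x).prod) ^ 2 := by
  have hTne : T ≠ 0 := fun h => hT (by simp [h])
  have hzero : ∀ x ∈ T.roots, x ≠ 0 := by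
    intro x hx h0x
    apply hT
    have hr := isRoot_of_mem_roots hx
    rwa [h0x] at hr
  have hng : T.roots.filter (fun x => ¬ 0 < x) = T.roots.filter (fun x => x < 0) := by
    refine Multiset.filter_congr fun x hx => ?_
    constructor
    · intro h; exact lt_of_le_of_ne (not_lt.1 h) (hzero x hx)
    · intro h; exact not_lt.2 h.le
  have hpr : T.roots.filter (fun x => 0 < x)
      = (T.roots.filter (fun x => x < 0)).map (fun x => -x) := by
    conv_lhs => rw [← roots_map_neg hTne hc]
    rw [Multiset.filter_map]
    congr 1
    refine Multiset.filter_congr fun x hx => ?_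
    simp [neg_pos]
  have hsplit := Multiset.filter_add_not (fun x => 0 < x) T.roots
  have hprod : T.roots.prod
      = (T.roots.filter (fun x => 0 < x)).prod * (T.roots.filter (fun x => x < 0)).prod := by
    conv_lhs => rw [← hsplit]
    rw [Multiset.prod_add, hng]
  set q := (T.roots.filter (fun x => x < 0)).prod with hq
  have hprpr : (T.roots.filter (fun x => 0 < x)).prod
      = (-1) ^ (Multiset.card (T.roots.filter (fun x => x < 0))) * q := by
    rw [hpr, Multiset.prod_map_neg]
  have hcardeq : Multiset.card (T.roots.filter fun x => 0 < x)
      = Multiset.card (T.roots.filter fun x => x < 0) := by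
    rw [hpr, Multiset.card_map]
  set n := Multiset.card (T.roots.filter fun x => x < 0)
  have h1 : ((-1 : ℝ) ^ n) ^ 2 = 1 := by
    rw [← pow_mul, mul_comm, pow_mul, neg_one_sq, one_pow]
  rw [hprod, hprpr, hcardeq, mul_pow, h1, one_mul, sq, ← mul_assoc]

private lemma coeff_zero_eq {T : ℝ[X]} (hcard : Multiset.card T.roots = T.natDegree) :
    T.coeff 0 = T.leadingCoeff * (-1) ^ T.natDegree * T.roots.prod := by
  have hsp : T.Splits := (splits_iff_card_roots).2 hcard
  conv_lhs => rw [coeff_zero_eq_eval_zero, hsp.eq_prod_roots]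
  rw [eval_mul, eval_C, eval_multiset_prod, Multiset.map_map]
  have : ((fun a : ℝ => eval 0 (X - C a)) : ℝ → ℝ) = fun a => -a := by
    funext a; simp
  simp only [Function.comp_def, eval_sub, eval_X, eval_C, zero_sub]
  rw [show (fun a : ℝ => -a) = (Neg.neg : ℝ → ℝ) from rfl, Multiset.prod_map_neg, hcard]
  ring

/-- **Odd-degree case of the key lemma for Arnold's theorem**: let `P` be a real polynomial
of degree `2d` (`d` odd) with only even-degree monomials, nonzero constant term, all roots
real, and exactly `d` positive roots; if `Q₊ = P - ε X^d` and `Q₋ = P + ε X^d` have all roots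
real with exactly `d` positive ones each, then the square of the product of the positive
roots of `P` equals the product of the positive roots of `Q₊` times that of `Q₋`. -/
theorem prod_pos_roots_eq_odd_case (d : ℕ) (hd : 1 ≤ d) (hdodd : Odd d) (P : ℝ[X])
    (hdeg : P.natDegree = 2 * d) (hodd : ∀ k, Odd k → P.coeff k = 0)
    (h0 : P.coeff 0 ≠ 0) (hroots : Multiset.card P.roots = 2 * d)
    (hpos : Multiset.card (P.roots.filter fun x => 0 < x) = d)
    (ε : ℝ)
    (hrootsQp : Multiset.card (P - ε • X ^ d).roots = 2 * d)
    (hrootsQm : Multiset.card (P + ε • X ^ d).roots = 2 * d)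
    (hposQp : Multiset.card ((P - ε • X ^ d).roots.filter fun x => 0 < x) = d)
    (hposQm : Multiset.card ((P + ε • X ^ d).roots.filter fun x => 0 < x) = d) :
    ((P.roots.filter fun x => 0 < x).prod) ^ 2 =
      ((P - ε • X ^ d).roots.filter fun x => 0 < x).prod *
        ((P + ε • X ^ d).roots.filter fun x => 0 < x).prod := by
  set Qp := P - ε • X ^ d with hQpdef
  set Qm := P + ε • X ^ d with hQmdef
  have hP0 : P.eval 0 ≠ 0 := by rwa [← coeff_zero_eq_eval_zero]
  have hPne : P ≠ 0 := fun h => h0 (by simp [h])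
  have hcompP : P.comp (-X) = P := comp_negX_eq hodd
  -- Q's are nonzero
  have hQpne : Qp ≠ 0 := by
    intro h; rw [h] at hrootsQp; simp at hrootsQp; omega
  have hQmne : Qm ≠ 0 := by
    intro h; rw [h] at hrootsQm; simp at hrootsQm; omega
  -- degrees
  have hdegQp : Qp.natDegree = 2 * d := by
    refine le_antisymm ?_ ?_
    · refine le_trans (natDegree_sub_le _ _) ?_
      simp only [hdeg, max_le_iff]
      exact ⟨le_refl _, le_trans (natDegree_smul_le _ _) (by rw [natDegree_X_pow]; omega)⟩
    · rw [← hrootsQp]; exact card_roots' Qp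
  have hdegQm : Qm.natDegree = 2 * d := by
    refine le_antisymm ?_ ?_
    · refine le_trans (natDegree_add_le _ _) ?_
      simp only [hdeg, max_le_iff]
      exact ⟨le_refl _, le_trans (natDegree_smul_le _ _) (by rw [natDegree_X_pow]; omega)⟩
    · rw [← hrootsQm]; exact card_roots' Qm
  have hdne : d ≠ 2 * d := by omega
  have hXd2d : ((X : ℝ[X]) ^ d).coeff (2 * d) = 0 := by
    rw [coeff_X_pow, if_neg (by omega)]
  have hleadQp : Qp.leadingCoeff = P.leadingCoeff := by
    rw [leadingCoeff, leadingCoeff, hdegQp, hdeg, hQpdef, coeff_sub, coeff_smul, hXd2d]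
    simp
  have hleadQm : Qm.leadingCoeff = P.leadingCoeff := by
    rw [leadingCoeff, leadingCoeff, hdegQm, hdeg, hQmdef, coeff_add, coeff_smul, hXd2d]
    simp
  have hd0 : d ≠ 0 := by omega
  have hXd0 : ((X : ℝ[X]) ^ d).coeff 0 = 0 := by
    rw [coeff_X_pow, if_neg (by omega)]
  have hc0Qp : Qp.coeff 0 = P.coeff 0 := by
    rw [hQpdef, coeff_sub, coeff_smul, hXd0]; simp
  have hc0Qm : Qm.coeff 0 = P.coeff 0 := by
    rw [hQmdef, coeff_add, coeff_smul, hXd0]; simp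
  -- symmetry of S = Qp * Qm
  have hcompQp : Qp.comp (-X) = Qm := by
    rw [hQpdef, hQmdef, sub_comp, smul_comp, pow_comp, X_comp, hcompP,
      Odd.neg_pow hdodd, smul_neg, sub_neg_eq_add]
  have hcompQm : Qm.comp (-X) = Qp := by
    rw [hQmdef, hQpdef, add_comp, smul_comp, pow_comp, X_comp, hcompP,
      Odd.neg_pow hdodd, smul_neg, ← sub_eq_add_neg]
  set S := Qp * Qm with hSdef
  have hSne : S ≠ 0 := mul_ne_zero hQpne hQmne
  have hcompS : S.comp (-X) = S := by
    rw [hSdef, mul_comp, hcompQp, hcompQm, mul_comm]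
  have hrootsS : S.roots = Qp.roots + Qm.roots := roots_mul hSne
  have hS0 : S.eval 0 ≠ 0 := by
    rw [hSdef, eval_mul]
    exact mul_ne_zero (by rw [← coeff_zero_eq_eval_zero, hc0Qp]; exact h0)
      (by rw [← coeff_zero_eq_eval_zero, hc0Qm]; exact h0)
  have hcardS : Multiset.card S.roots = S.natDegree := by
    rw [hrootsS, Multiset.card_add, hrootsQp, hrootsQm, hSdef,
      natDegree_mul hQpne hQmne, hdegQp, hdegQm]
  -- the coefficient formulas
  have hcP := coeff_zero_eq (T := P) (by rw [hroots, hdeg])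
  have hcS := coeff_zero_eq hcardS
  have hkP := key_prod hP0 hcompP
  have hkS := key_prod hS0 hcompS
  -- compute filter data for S
  have hfilterS : S.roots.filter (fun x => 0 < x)
      = Qp.roots.filter (fun x => 0 < x) + Qm.roots.filter (fun x => 0 < x) := by
    rw [hrootsS, Multiset.filter_add]
  have hcardposS : Multiset.card (S.roots.filter fun x => 0 < x) = 2 * d := by
    rw [hfilterS, Multiset.card_add, hposQp, hposQm]; omega
  have hprodS : (S.roots.filter fun x => 0 < x).prod
      = (Qp.roots.filter fun x => 0 < x).prod * (Qm.roots.filter fun x => 0 < x).prod := by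
    rw [hfilterS, Multiset.prod_add]
  -- put everything together
  set p := (P.roots.filter fun x => 0 < x).prod
  set s := (S.roots.filter fun x => 0 < x).prod
  have hnd : S.natDegree = 2 * (2 * d) := by
    rw [hSdef, natDegree_mul hQpne hQmne, hdegQp, hdegQm]; ring
  have heven2d : ((-1 : ℝ)) ^ (2 * d) = 1 := by
    rw [pow_mul, neg_one_sq, one_pow]
  have heven4d : ((-1 : ℝ)) ^ (2 * (2 * d)) = 1 := by
    rw [pow_mul, neg_one_sq, one_pow]
  have hoddd : ((-1 : ℝ)) ^ d = -1 := Odd.neg_one_pow hdodd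
  -- P : coeff 0 P = lead * (-1)^(2d) * ((-1)^d * p^2) = - lead * p^2
  rw [hkP, hpos, hoddd, hdeg, heven2d] at hcP
  -- S : coeff 0 S = lead^2 * s^2
  rw [hkS, hcardposS, heven2d, hnd, heven4d] at hcS
  have hcS0 : S.coeff 0 = P.coeff 0 * P.coeff 0 := by
    rw [hSdef, mul_coeff_zero, hc0Qp, hc0Qm]
  have hleadS : S.leadingCoeff = P.leadingCoeff * P.leadingCoeff := by
    rw [hSdef, leadingCoeff_mul, hleadQp, hleadQm]
  rw [hcS0, hleadS] at hcS
  -- now : P.coeff 0 = P.leadingCoeff * 1 * (-1 * p^2)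
  -- and  (P.coeff 0)^2 = P.leadingCoeff^2 * 1 * s^2
  have hlead0 : P.leadingCoeff ≠ 0 := leadingCoeff_ne_zero.2 hPne
  have h2 : P.leadingCoeff * P.leadingCoeff ≠ 0 := mul_ne_zero hlead0 hlead0
  have hsq : (p ^ 2) ^ 2 = s ^ 2 := by
    have h3 : P.leadingCoeff * P.leadingCoeff * ((p ^ 2) ^ 2)
        = P.leadingCoeff * P.leadingCoeff * (s ^ 2) := by
      calc P.leadingCoeff * P.leadingCoeff * ((p ^ 2) ^ 2)
          = (P.leadingCoeff * 1 * (-1 * p ^ 2)) * (P.leadingCoeff * 1 * (-1 * p ^ 2)) := by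
            ring
        _ = P.coeff 0 * P.coeff 0 := by rw [← hcP]
        _ = P.leadingCoeff * P.leadingCoeff * 1 * (1 * s ^ 2) := hcS
        _ = P.leadingCoeff * P.leadingCoeff * (s ^ 2) := by ring
    exact mul_left_cancel₀ h2 h3
  have hspos : 0 < s := by
    rw [hprodS]
    have h1 : 0 < (Qp.roots.filter fun x => 0 < x).prod :=
      Multiset.prod_pos fun x hx => (Multiset.mem_filter.1 hx).2
    have h2 : 0 < (Qm.roots.filter fun x => 0 < x).prod :=
      Multiset.prod_pos fun x hx => (Multiset.mem_filter.1 hx).2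
    exact mul_pos h1 h2
  have h4 : (p ^ 2 - s) * (p ^ 2 + s) = 0 := by linear_combination hsq
  have h5 : p ^ 2 = s := by
    rcases mul_eq_zero.1 h4 with h | h
    · linarith
    · nlinarith [sq_nonneg p, hspos]
  rw [h5, ← hprodS]
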